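/- Let a₁ > 0, a₂ ∈ ℝ with a₂ ≥ 0, set r = a₁/a₂ (assuming a₂ > 0), and let 2 < p < 2 + 2·r·(r + √(1+r²)). Then there exists η > 0 such that the quadratic form A(f,g) = (1/4 − η)·a₁·f² + ((p−2)/4)·a₂·f·g + ((p−1)/4 − η)·a₁·g² is nonnegative for all real f, g. -/

import Mathlib

theorem quadratic_form_nonneg (a₁ a₂ p : ℝ) (ha₁ : 0 < a₁) (ha₂ : 0 < a₂)
    (hp₂ : 2 < p)
    (hp : p < 2 + 2 * (a₁ / a₂) * (a₁ / a₂ + Real.sqrt (1 + (a₁ / a₂) ^ 2))) :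
    ∃ η : ℝ, 0 < η ∧ ∀ f g : ℝ,
      0 ≤ (1 / 4 - η) * a₁ * f ^ 2 + ((p - 2) / 4) * a₂ * f * g
          + ((p - 1) / 4 - η) * a₁ * g ^ 2 := by
  set r := a₁ / a₂ with hr
  have hrpos : 0 < r := div_pos ha₁ ha₂
  set s := Real.sqrt (1 + r ^ 2) with hs
  have hs0 : 0 ≤ s := Real.sqrt_nonneg _
  have hs2 : s ^ 2 = 1 + r ^ 2 := Real.sq_sqrt (by positivity)
  -- key strict discriminant inequality in terms of r
  have hkey : (p - 2) ^ 2 < 4 * (p - 1) * r ^ 2 := by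
    nlinarith [sq_nonneg (s - r), mul_pos hrpos hrpos, sq_nonneg (p - 2 - 2*r^2 - 2*r*s),
      mul_pos (sub_pos.2 hp₂) hrpos]
  -- translate to a₁ a₂
  have ha₁r : a₁ = r * a₂ := by rw [hr, div_mul_cancel₀ _ ha₂.ne']
  have hD : (p - 2) ^ 2 * a₂ ^ 2 < 4 * (p - 1) * a₁ ^ 2 := by
    rw [ha₁r]; nlinarith [sq_nonneg a₂, mul_pos ha₂ ha₂]
  set D := 4 * (p - 1) * a₁ ^ 2 - (p - 2) ^ 2 * a₂ ^ 2 with hDdef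
  have hDpos : 0 < D := by simp [hDdef]; linarith
  have hppos : 0 < p := by linarith
  set η := min (1/8) (D / (16 * p * a₁ ^ 2)) with hη
  have hηpos : 0 < η := lt_min (by norm_num) (div_pos hDpos (by positivity))
  have hη8 : η ≤ 1/8 := min_le_left _ _
  have hηD : η * (16 * p * a₁ ^ 2) ≤ D := by
    have := min_le_right (1/8) (D / (16 * p * a₁ ^ 2))
    calc η * (16 * p * a₁ ^ 2) ≤ D / (16 * p * a₁ ^ 2) * (16 * p * a₁ ^ 2) := by
          apply mul_le_mul_of_nonneg_right this (by positivity)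
      _ = D := by field_simp
  refine ⟨η, hηpos, fun f g => ?_⟩
  have hα : 0 < (1/4 - η) * a₁ := by nlinarith
  have hdisc : ((p - 2)/4 * a₂) ^ 2 ≤ 4 * ((1/4 - η) * a₁) * (((p - 1)/4 - η) * a₁) := by
    have h4 : 0 ≤ η ^ 2 * a₁ ^ 2 := by positivity
    nlinarith [hηD, hDpos]
  nlinarith [sq_nonneg (2 * ((1/4 - η) * a₁) * f + (p - 2)/4 * a₂ * g),
    mul_nonneg (sub_nonneg.2 hdisc) (sq_nonneg g), hα, sq_nonneg g]
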